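/- arXiv:1206.3846 — 5 statements merged into one kernel-verified Lean document; each statement's English description precedes it below -/
import Mathlib

section
/- Let a(t) = -Ĵ₀t²/2 + (1/β)[((1+t)/2)log((1+t)/2) + ((1-t)/2)log((1-t)/2)] on (-1,1) and F(t) = a(t) - a(m_β), where m_β ∈ (0,1) satisfies m_β = tanh(βĴ₀ m_β) and βĴ₀ > 1. Then F(m_β) = 0 and F(t) ≥ 0 for all t ∈ (-1,1). -/
set_option maxHeartbeats 1000000


open Real

/-- With `a(t) = -Ĵ₀ t²/2 + β⁻¹[((1+t)/2)log((1+t)/2) + ((1-t)/2)log((1-t)/2)]`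
and `F(t) = a(t) - a(m_β)`, where `m_β ∈ (0,1)` solves `m = tanh (β Ĵ₀ m)` and
`β Ĵ₀ > 1`, one has `F(m_β) = 0` and `F(t) ≥ 0` on `(-1, 1)`. -/
theorem stmt_1 (β J₀ mβ : ℝ) (hβ : 0 < β) (hJ : 0 < J₀) (h : 1 < β * J₀)
    (hm0 : 0 < mβ) (hm1 : mβ < 1) (hm : mβ = Real.tanh (β * J₀ * mβ))
    (a F : ℝ → ℝ)
    (ha : ∀ t, a t = -J₀ * t ^ 2 / 2 +
      (1 / β) * ((1 + t) / 2 * Real.log ((1 + t) / 2)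
        + (1 - t) / 2 * Real.log ((1 - t) / 2)))
    (hF : ∀ t, F t = a t - a mβ) :
    F mβ = 0 ∧ ∀ t ∈ Set.Ioo (-1 : ℝ) 1, 0 ≤ F t := by
  have hFm : F mβ = 0 := by rw [hF]; ring
  refine ⟨hFm, ?_⟩
  set c := β * J₀ with hc
  have hc0 : 0 < c := mul_pos hβ hJ
  -- the scaled derivative function
  set φ : ℝ → ℝ := fun t => (Real.log (1 + t) - Real.log (1 - t)) / 2 - c * t with hφ
  have hφ0 : φ 0 = 0 := by simp [hφ]
  -- φ mβ = 0
  have hφm : φ mβ = 0 := by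
    set y := c * mβ with hy
    have hch : (0:ℝ) < Real.cosh y := Real.cosh_pos y
    have h1p : 1 + mβ = Real.exp y / Real.cosh y := by
      rw [hm, Real.tanh_eq_sinh_div_cosh, ← Real.cosh_add_sinh]
      field_simp
    have h1m : 1 - mβ = Real.exp (-y) / Real.cosh y := by
      rw [hm, Real.tanh_eq_sinh_div_cosh, ← Real.cosh_sub_sinh]
      field_simp
    have l1 : Real.log (1 + mβ) = y - Real.log (Real.cosh y) := by
      rw [h1p, Real.log_div (Real.exp_ne_zero y) hch.ne', Real.log_exp]
    have l2 : Real.log (1 - mβ) = -y - Real.log (Real.cosh y) := by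
      rw [h1m, Real.log_div (Real.exp_ne_zero (-y)) hch.ne', Real.log_exp]
    simp only [hφ, l1, l2]
    ring
  -- derivative of φ
  have hφd : ∀ t ∈ Set.Ioo (-1 : ℝ) 1,
      HasDerivAt φ ((1 / (1 + t) + 1 / (1 - t)) / 2 - c) t := by
    intro t ht
    have h1 : (0:ℝ) < 1 + t := by linarith [ht.1]
    have h2 : (0:ℝ) < 1 - t := by linarith [ht.2]
    have d1 : HasDerivAt (fun t : ℝ => Real.log (1 + t)) (1 / (1 + t)) t := by
      simpa [Function.comp_def] using (Real.hasDerivAt_log h1.ne').comp t ((hasDerivAt_id t).const_add 1)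
    have d2 : HasDerivAt (fun t : ℝ => Real.log (1 - t)) (-(1 / (1 - t))) t := by
      have := (Real.hasDerivAt_log h2.ne').comp t
        ((hasDerivAt_id t).neg.const_add 1)
      simpa [div_eq_mul_inv, Function.comp_def] using this
    have := ((d1.sub d2).div_const 2).sub ((hasDerivAt_id t).const_mul c)
    exact this.congr_deriv (by ring)
  -- threshold t₀
  set t₀ : ℝ := Real.sqrt (1 - 1 / c) with ht₀
  have hct : (0:ℝ) ≤ 1 - 1 / c := by
    have : 1 / c < 1 := by rw [div_lt_one hc0]; linarith
    linarith
  have ht₀sq : t₀ ^ 2 = 1 - 1 / c := Real.sq_sqrt hct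
  have ht₀0 : 0 ≤ t₀ := Real.sqrt_nonneg _
  have ht₀1 : t₀ < 1 := by
    nlinarith [ht₀sq, ht₀0, one_div_pos.mpr hc0]
  -- φ strictly decreasing on [0, t₀]
  have hanti : StrictAntiOn φ (Set.Icc 0 t₀) := by
    apply strictAntiOn_of_deriv_neg (convex_Icc 0 t₀)
    · intro s hs
      exact ((hφd s ⟨by linarith [hs.1], by linarith [hs.2]⟩).continuousAt).continuousWithinAt
    · intro s hs
      rw [interior_Icc] at hs
      have hs0 : 0 < s := hs.1
      have hs1 : s < 1 := lt_of_lt_of_le hs.2 ht₀1.le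
      rw [(hφd s ⟨by linarith, hs1⟩).deriv]
      have h1 : (0:ℝ) < 1 + s := by linarith
      have h2 : (0:ℝ) < 1 - s := by linarith
      have hsq : s ^ 2 < t₀ ^ 2 := by nlinarith [hs.2]
      rw [ht₀sq] at hsq
      have key : 1 < c * ((1 + s) * (1 - s)) := by
        nlinarith [mul_lt_mul_of_pos_left hsq hc0, mul_one_div_cancel hc0.ne']
      have : (1 / (1 + s) + 1 / (1 - s)) / 2 = 1 / ((1 + s) * (1 - s)) := by
        field_simp; ring
      rw [this, sub_neg, div_lt_iff₀ (by positivity)]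
      linarith [key]
  -- φ strictly increasing on [t₀, 1)
  have hmono : StrictMonoOn φ (Set.Ico t₀ 1) := by
    apply strictMonoOn_of_deriv_pos (convex_Ico t₀ 1)
    · intro s hs
      exact ((hφd s ⟨by linarith [hs.1], hs.2⟩).continuousAt).continuousWithinAt
    · intro s hs
      rw [interior_Ico] at hs
      have hs0 : 0 < s := lt_of_le_of_lt ht₀0 hs.1
      have hs1 : s < 1 := hs.2
      rw [(hφd s ⟨by linarith, hs1⟩).deriv]
      have h1 : (0:ℝ) < 1 + s := by linarith
      have h2 : (0:ℝ) < 1 - s := by linarith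
      have hsq : t₀ ^ 2 < s ^ 2 := by nlinarith [hs.1]
      rw [ht₀sq] at hsq
      have key : c * ((1 + s) * (1 - s)) < 1 := by
        nlinarith [mul_lt_mul_of_pos_left hsq hc0, mul_one_div_cancel hc0.ne']
      have : (1 / (1 + s) + 1 / (1 - s)) / 2 = 1 / ((1 + s) * (1 - s)) := by
        field_simp; ring
      rw [this]
      rw [sub_pos, lt_div_iff₀ (by positivity)]
      nlinarith
  -- t₀ < mβ
  have htm : t₀ < mβ := by
    by_contra hcon
    push_neg at hcon
    have := hanti ⟨le_refl 0, by linarith⟩ ⟨hm0.le, hcon⟩ hm0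
    rw [hφ0, hφm] at this
    exact lt_irrefl 0 this
  -- sign of φ
  have hφneg : ∀ t ∈ Set.Ioo (0:ℝ) mβ, φ t < 0 := by
    intro t ht
    rcases le_or_gt t t₀ with h1 | h1
    · have := hanti ⟨le_refl 0, by linarith⟩ ⟨ht.1.le, h1⟩ ht.1
      rwa [hφ0] at this
    · have := hmono ⟨h1.le, by linarith [ht.2]⟩ ⟨htm.le, hm1⟩ ht.2
      rwa [hφm] at this
  have hφpos : ∀ t ∈ Set.Ioo mβ (1:ℝ), 0 < φ t := by
    intro t ht
    have := hmono ⟨htm.le, hm1⟩ ⟨by linarith [ht.1], ht.2⟩ ht.1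
    rwa [hφm] at this
  -- derivative of a
  have had : ∀ t ∈ Set.Ioo (-1 : ℝ) 1, HasDerivAt a ((1 / β) * φ t) t := by
    intro t ht
    have h1 : (0:ℝ) < 1 + t := by linarith [ht.1]
    have h2 : (0:ℝ) < 1 - t := by linarith [ht.2]
    have e1 : HasDerivAt (fun t : ℝ => (1 + t) / 2) (1 / 2) t :=
      ((hasDerivAt_id t).const_add 1).div_const 2
    have e1' : ((0:ℝ) - 1) / 2 = -(1/2) := by norm_num
    have e2 : HasDerivAt (fun t : ℝ => (1 - t) / 2) (-(1 / 2)) t := by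
      rw [← e1']
      exact ((hasDerivAt_const t (1:ℝ)).sub (hasDerivAt_id t)).div_const 2
    have g1 : HasDerivAt (fun t : ℝ => (1 + t) / 2 * Real.log ((1 + t) / 2))
        ((Real.log ((1 + t) / 2) + 1) * (1 / 2)) t := by
      exact (Real.hasDerivAt_mul_log (by positivity)).comp t e1
    have g2 : HasDerivAt (fun t : ℝ => (1 - t) / 2 * Real.log ((1 - t) / 2))
        ((Real.log ((1 - t) / 2) + 1) * (-(1 / 2))) t := by
      exact (Real.hasDerivAt_mul_log (by positivity)).comp t e2
    have p1 : HasDerivAt (fun t : ℝ => -J₀ * t ^ 2 / 2) (-J₀ * t) t := by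
      have := ((hasDerivAt_pow 2 t).const_mul (-J₀)).div_const 2
      exact this.congr_deriv (by rw [show (2:ℕ) - 1 = 1 from rfl]; push_cast; ring)
    have total := p1.add ((g1.add g2).const_mul (1 / β))
    have hfun : a = fun t : ℝ => -J₀ * t ^ 2 / 2 +
        (1 / β) * ((1 + t) / 2 * Real.log ((1 + t) / 2)
          + (1 - t) / 2 * Real.log ((1 - t) / 2)) := funext ha
    rw [hfun]
    refine total.congr_deriv ?_
    have l1 : Real.log ((1 + t) / 2) = Real.log (1 + t) - Real.log 2 :=
      Real.log_div h1.ne' two_ne_zero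
    have l2 : Real.log ((1 - t) / 2) = Real.log (1 - t) - Real.log 2 :=
      Real.log_div h2.ne' two_ne_zero
    simp only [hφ, l1, l2, hc]
    field_simp
    ring
  -- a is even
  have haeven : ∀ t, a (-t) = a t := by
    intro t
    rw [ha, ha]
    have e1 : (1 + -t) / 2 = (1 - t) / 2 := by ring
    have e2 : (1 - -t) / 2 = (1 + t) / 2 := by ring
    rw [e1, e2]
    ring
  -- a antitone on [0, mβ]
  have haanti : AntitoneOn a (Set.Icc 0 mβ) := by
    apply antitoneOn_of_deriv_nonpos (convex_Icc 0 mβ)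
    · intro s hs
      exact ((had s ⟨by linarith [hs.1], by linarith [hs.2]⟩).continuousAt).continuousWithinAt
    · intro s hs
      rw [interior_Icc] at hs
      exact ((had s ⟨by linarith [hs.1], by linarith [hs.2]⟩).differentiableAt).differentiableWithinAt
    · intro s hs
      rw [interior_Icc] at hs
      rw [(had s ⟨by linarith [hs.1], by linarith [hs.2]⟩).deriv]
      exact mul_nonpos_of_nonneg_of_nonpos (by positivity) (hφneg s hs).le
  -- a monotone on [mβ, 1)
  have hamono : MonotoneOn a (Set.Ico mβ 1) := by
    apply monotoneOn_of_deriv_nonneg (convex_Ico mβ 1)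
    · intro s hs
      exact ((had s ⟨by linarith [hs.1], hs.2⟩).continuousAt).continuousWithinAt
    · intro s hs
      rw [interior_Ico] at hs
      exact ((had s ⟨by linarith [hs.1], hs.2⟩).differentiableAt).differentiableWithinAt
    · intro s hs
      rw [interior_Ico] at hs
      rw [(had s ⟨by linarith [hs.1], hs.2⟩).deriv]
      exact mul_nonneg (by positivity) (hφpos s hs).le
  -- key: a mβ ≤ a s for s ∈ [0, 1)
  have key : ∀ s ∈ Set.Ico (0:ℝ) 1, a mβ ≤ a s := by
    intro s hs
    rcases le_or_gt s mβ with h1 | h1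
    · exact haanti ⟨hs.1, h1⟩ ⟨hm0.le, le_refl mβ⟩ h1
    · exact hamono ⟨le_refl mβ, hm1⟩ ⟨h1.le, hs.2⟩ h1.le
  intro t ht
  rw [hF, sub_nonneg]
  rcases le_or_gt 0 t with h1 | h1
  · exact key t ⟨h1, ht.2⟩
  · rw [← haeven t]
    exact key (-t) ⟨by linarith, by linarith [ht.1]⟩
end

section
/- With F as above, F''(m_β) > 2F(0)/m_β². Equivalently, writing the condition out: -Ĵ₀ + (1/β)·1/(1-m_β²) > (2/m_β²)·F(0), where F(0) = a(0) - a(m_β). -/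
/-- With `F` the double-well free energy, `F''(m_β) > 2 F(0) / m_β²`, i.e.
`-Ĵ₀ + (1/β) / (1 - m_β²) > (2 / m_β²) * F(0)` where `F(0) = a(0) - a(m_β)`. -/
theorem stmt_2 (β J₀ mβ : ℝ) (hβ : 0 < β) (hJ : 0 < J₀) (h : 1 < β * J₀)
    (hm0 : 0 < mβ) (hm1 : mβ < 1) (hm : mβ = Real.tanh (β * J₀ * mβ))
    (a : ℝ → ℝ)
    (ha : ∀ t, a t = -J₀ * t ^ 2 / 2 +
      (1 / β) * ((1 + t) / 2 * Real.log ((1 + t) / 2)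
        + (1 - t) / 2 * Real.log ((1 - t) / 2))) :
    -J₀ + (1 / β) * (1 / (1 - mβ ^ 2)) > (2 / mβ ^ 2) * (a 0 - a mβ) := by
  set t := β * J₀ * mβ with ht
  have hc : (0:ℝ) < Real.cosh t := Real.cosh_pos t
  have hp : (0:ℝ) < (1 + mβ) / 2 := by linarith
  have hq : (0:ℝ) < (1 - mβ) / 2 := by linarith
  have hu : (0:ℝ) < 1 - mβ ^ 2 := by nlinarith
  -- exponential identities
  have e1 : (1 + mβ) / 2 = Real.exp t / (2 * Real.cosh t) := by
    rw [hm, Real.tanh_eq_sinh_div_cosh]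
    field_simp
    rw [← Real.cosh_add_sinh]
  have e2 : (1 - mβ) / 2 = Real.exp (-t) / (2 * Real.cosh t) := by
    rw [hm, Real.tanh_eq_sinh_div_cosh]
    field_simp
    rw [← Real.cosh_sub_sinh]
  set A := Real.log ((1 + mβ) / 2) with hA
  set B := Real.log ((1 - mβ) / 2) with hB
  set C := Real.log (1 - mβ ^ 2) with hC
  have h2c : (0:ℝ) < 2 * Real.cosh t := by linarith
  have hAB1 : A - B = 2 * t := by
    rw [hA, hB, e1, e2, Real.log_div (Real.exp_ne_zero t) (ne_of_gt h2c),
      Real.log_div (Real.exp_ne_zero (-t)) (ne_of_gt h2c), Real.log_exp, Real.log_exp]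
    ring
  have hAB2 : A + B = C - 2 * Real.log 2 := by
    have : A + B = Real.log ((1 + mβ) / 2 * ((1 - mβ) / 2)) :=
      (Real.log_mul (ne_of_gt hp) (ne_of_gt hq)).symm
    rw [this]
    have hprod : (1 + mβ) / 2 * ((1 - mβ) / 2) = (1 - mβ ^ 2) / 4 := by ring
    rw [hprod, Real.log_div (ne_of_gt hu) (by norm_num)]
    have h4 : Real.log 4 = 2 * Real.log 2 := by
      rw [show (4:ℝ) = 2 ^ 2 by norm_num, Real.log_pow]; push_cast; ring
    rw [h4, hC]
  have hlog2 : Real.log ((1:ℝ) / 2) = -Real.log 2 := by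
    rw [Real.log_div one_ne_zero (by norm_num), Real.log_one]; ring
  -- key expression for a 0 - a mβ
  have hkey : a 0 - a mβ = -J₀ * mβ ^ 2 / 2 - C / (2 * β) := by
    rw [ha 0, ha mβ]
    have : (1 + mβ) / 2 * A + (1 - mβ) / 2 * B
        = ((A + B) + mβ * (A - B)) / 2 := by ring
    simp only [← hA, ← hB]
    rw [this, hAB1, hAB2]
    norm_num
    rw [hlog2]
    field_simp
    ring
  rw [hkey]
  -- key log inequality: -C < mβ²/(1-mβ²)
  have hlt : Real.log ((1 - mβ ^ 2)⁻¹) < (1 - mβ ^ 2)⁻¹ - 1 :=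
    Real.log_lt_sub_one_of_pos (by positivity) (by
      intro hcon
      have : 1 - mβ ^ 2 = 1 := by
        field_simp at hcon
        linarith [hcon]
      nlinarith)
  rw [Real.log_inv] at hlt
  have hinv : (1 - mβ ^ 2)⁻¹ - 1 = mβ ^ 2 / (1 - mβ ^ 2) := by
    field_simp
    ring
  rw [hinv, ← hC] at hlt
  -- conclude
  have hm2 : (0:ℝ) < mβ ^ 2 := by positivity
  rw [gt_iff_lt]
  rw [show (2 / mβ ^ 2) * (-J₀ * mβ ^ 2 / 2 - C / (2 * β)) = -J₀ + -C / (β * mβ ^ 2) by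
    field_simp; ring]
  have hfin : -C / (β * mβ ^ 2) < (1 / β) * (1 / (1 - mβ ^ 2)) := by
    rw [div_lt_iff₀ (by positivity)]
    have heq : (1 / β) * (1 / (1 - mβ ^ 2)) * (β * mβ ^ 2) = mβ ^ 2 / (1 - mβ ^ 2) := by
      field_simp
    rw [heq]
    exact hlt
  linarith
end

section
/- With F as above and F̃(t) = (F(0)/(2m_β²))(|t| - m_β)², one has F̃(t) ≤ (1/2)F(t) for all t ∈ (-1,1). Equivalently, F(t) ≥ (F(0)/m_β²)(|t| - m_β)². -/
open Set Real

/-- Derivative of the free-energy-type function. -/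
private lemma aux_hasDerivAt_a (J₀ β : ℝ) (hβ : β ≠ 0) {t : ℝ} (h1 : -1 < t) (h2 : t < 1) :
    HasDerivAt (fun s : ℝ => -J₀ * s ^ 2 / 2 +
      (1 / β) * ((1 + s) / 2 * Real.log ((1 + s) / 2)
        + (1 - s) / 2 * Real.log ((1 - s) / 2)))
      (-J₀ * t + (1 / (2 * β)) * (Real.log (1 + t) - Real.log (1 - t))) t := by
  have hp : (0:ℝ) < (1 + t) / 2 := by linarith
  have hq : (0:ℝ) < (1 - t) / 2 := by linarith
  have hu : HasDerivAt (fun s : ℝ => (1 + s) / 2) (1 / 2) t := by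
    simpa using ((hasDerivAt_id t).const_add 1).div_const 2
  have hv : HasDerivAt (fun s : ℝ => (1 - s) / 2) (-1 / 2) t := by
    simpa using ((hasDerivAt_id t).const_sub 1).div_const 2
  have hlu : HasDerivAt (fun s : ℝ => Real.log ((1 + s) / 2)) ((1/2) / ((1 + t) / 2)) t := by
    exact hu.log hp.ne'
  have hlv : HasDerivAt (fun s : ℝ => Real.log ((1 - s) / 2)) ((-1/2) / ((1 - t) / 2)) t := by
    exact hv.log hq.ne'
  have h₁ : HasDerivAt (fun s : ℝ => (1 + s) / 2 * Real.log ((1 + s) / 2))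
      (1/2 * Real.log ((1 + t) / 2) + (1 + t) / 2 * ((1/2) / ((1 + t) / 2))) t := hu.mul hlu
  have h₂ : HasDerivAt (fun s : ℝ => (1 - s) / 2 * Real.log ((1 - s) / 2))
      (-1/2 * Real.log ((1 - t) / 2) + (1 - t) / 2 * ((-1/2) / ((1 - t) / 2))) t := hv.mul hlv
  have h₃ : HasDerivAt (fun s : ℝ => -J₀ * s ^ 2 / 2) (-J₀ * t) t := by
    have h' := ((hasDerivAt_pow 2 t).const_mul (-J₀)).div_const 2
    exact h'.congr_deriv (by ring)
  have h := h₃.add ((h₁.add h₂).const_mul (1 / β))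
  refine h.congr_deriv ?_
  have hpne : (1:ℝ) + t ≠ 0 := by linarith
  have hqne : (1:ℝ) - t ≠ 0 := by linarith
  have e1 : (1 + t) / 2 * ((1/2) / ((1 + t) / 2)) = 1/2 := by
    field_simp
  have e2 : (1 - t) / 2 * ((-1/2) / ((1 - t) / 2)) = -1/2 := by
    field_simp
  have l1 : Real.log ((1 + t) / 2) = Real.log (1 + t) - Real.log 2 :=
    Real.log_div (by linarith) two_ne_zero
  have l2 : Real.log ((1 - t) / 2) = Real.log (1 - t) - Real.log 2 :=
    Real.log_div (by linarith) two_ne_zero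
  rw [e1, e2, l1, l2]
  field_simp
  ring

/-- With `F(t) = a(t) - a(m_β)` and `F̃(t) = (F(0)/(2 m_β²)) (|t| - m_β)²`, one has
`F̃(t) ≤ F(t)/2` on `(-1,1)`, i.e. `F(t) ≥ (F(0)/m_β²) (|t| - m_β)²`. -/
theorem stmt_4 (β J₀ mβ : ℝ) (hβ : 0 < β) (hJ : 0 < J₀) (h : 1 < β * J₀)
    (hm0 : 0 < mβ) (hm1 : mβ < 1) (hm : mβ = Real.tanh (β * J₀ * mβ))
    (a F Ftilde : ℝ → ℝ)
    (ha : ∀ t, a t = -J₀ * t ^ 2 / 2 +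
      (1 / β) * ((1 + t) / 2 * Real.log ((1 + t) / 2)
        + (1 - t) / 2 * Real.log ((1 - t) / 2)))
    (hF : ∀ t, F t = a t - a mβ)
    (hFt : ∀ t, Ftilde t = (F 0 / (2 * mβ ^ 2)) * (|t| - mβ) ^ 2) :
    ∀ t ∈ Set.Ioo (-1 : ℝ) 1,
      Ftilde t ≤ F t / 2 ∧ (F 0 / mβ ^ 2) * (|t| - mβ) ^ 2 ≤ F t := by
  have hmne : mβ ≠ 0 := hm0.ne'
  set c : ℝ := F 0 / mβ ^ 2 with hc
  set G : ℝ → ℝ := fun s => F s - c * (s - mβ) ^ 2 with hGdef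
  set φ : ℝ → ℝ := fun s => -J₀ * s + (1 / (2 * β)) * (Real.log (1 + s) - Real.log (1 - s))
      - 2 * c * (s - mβ) with hφdef
  set ψ : ℝ → ℝ := fun s => -J₀ + (1 / (2 * β)) * (1 / (1 + s) + 1 / (1 - s)) - 2 * c
      with hψdef
  -- derivative of G
  have hG' : ∀ t ∈ Ioo (-1 : ℝ) 1, HasDerivAt G (φ t) t := by
    intro t ht
    have haF : F = fun s : ℝ => (-J₀ * s ^ 2 / 2 +
        (1 / β) * ((1 + s) / 2 * Real.log ((1 + s) / 2)
          + (1 - s) / 2 * Real.log ((1 - s) / 2))) - a mβ := by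
      funext s; rw [hF s, ha s]
    have hsq : HasDerivAt (fun s : ℝ => c * (s - mβ) ^ 2) (2 * c * (t - mβ)) t := by
      have := ((hasDerivAt_id t).sub_const mβ).pow 2
      have := this.const_mul c
      exact this.congr_deriv (by simp only [id_eq]; ring)
    have hda := ((aux_hasDerivAt_a J₀ β hβ.ne' ht.1 ht.2).sub_const (a mβ)).sub hsq
    rw [hGdef, haF]
    exact hda
  -- derivative of φ
  have hφ' : ∀ t ∈ Ioo (-1 : ℝ) 1, HasDerivAt φ (ψ t) t := by
    intro t ht
    have hp : (0:ℝ) < 1 + t := by linarith [ht.1]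
    have hq : (0:ℝ) < 1 - t := by linarith [ht.2]
    have h1 : HasDerivAt (fun s : ℝ => Real.log (1 + s)) (1 / (1 + t)) t := by
      have h' := (Real.hasDerivAt_log hp.ne').comp t ((hasDerivAt_id t).const_add 1)
      exact h'.congr_deriv (by simp [one_div])
    have h2 : HasDerivAt (fun s : ℝ => Real.log (1 - s)) (-(1 / (1 - t))) t := by
      have h' := (Real.hasDerivAt_log hq.ne').comp t ((hasDerivAt_id t).const_sub 1)
      exact h'.congr_deriv (by simp [one_div])
    have h3 : HasDerivAt (fun s : ℝ => -J₀ * s) (-J₀) t := by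
      simpa using (hasDerivAt_id t).const_mul (-J₀)
    have h4 : HasDerivAt (fun s : ℝ => 2 * c * (s - mβ)) (2 * c) t := by
      simpa using ((hasDerivAt_id t).sub_const mβ).const_mul (2 * c)
    have := (h3.add ((h1.sub h2).const_mul (1 / (2 * β)))).sub h4
    exact this.congr_deriv (by ring)
  -- ψ is strictly monotone on [0,1)
  have hψmono : ∀ x ∈ Ico (0:ℝ) 1, ∀ y ∈ Ico (0:ℝ) 1, x < y → ψ x < ψ y := by
    intro x hx y hy hxy
    have hx1 : (0:ℝ) < 1 + x := by linarith [hx.1]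
    have hx2 : (0:ℝ) < 1 - x := by linarith [hx.2]
    have hy1 : (0:ℝ) < 1 + y := by linarith [hy.1]
    have hy2 : (0:ℝ) < 1 - y := by linarith [hy.2]
    have hxx : (0:ℝ) < 1 - x ^ 2 := by nlinarith
    have hyy : (0:ℝ) < 1 - y ^ 2 := by nlinarith
    have hxxne := hxx.ne'
    have hyyne := hyy.ne'
    have hx1ne := hx1.ne'
    have hx2ne := hx2.ne'
    have hy1ne := hy1.ne'
    have hy2ne := hy2.ne'
    have ex : 1 / (1 + x) + 1 / (1 - x) = 2 / (1 - x ^ 2) := by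
      field_simp; ring
    have ey : 1 / (1 + y) + 1 / (1 - y) = 2 / (1 - y ^ 2) := by
      field_simp; ring
    have hlt : 1 - y ^ 2 < 1 - x ^ 2 := by nlinarith [hx.1]
    have key : 2 / (1 - x ^ 2) < 2 / (1 - y ^ 2) :=
      div_lt_div_of_pos_left (by norm_num) hyy hlt
    have hb : (0:ℝ) < 1 / (2 * β) := by positivity
    simp only [hψdef]
    rw [ex, ey]
    nlinarith [mul_lt_mul_of_pos_left key hb]
  -- φ mβ = 0
  have hφm : φ mβ = 0 := by
    have hE : Real.log (1 + mβ) - Real.log (1 - mβ) = 2 * (β * J₀ * mβ) := by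
      set y := β * J₀ * mβ with hy
      have hEpos : (0:ℝ) < Real.exp y := Real.exp_pos y
      have htanh : mβ = (Real.exp y - Real.exp (-y)) / (Real.exp y + Real.exp (-y)) := by
        rw [hm, Real.tanh_eq_sinh_div_cosh, Real.sinh_eq, Real.cosh_eq]
        field_simp
      have hsum : (0:ℝ) < Real.exp y + Real.exp (-y) := by positivity
      have h1p : 1 + mβ = 2 * Real.exp y / (Real.exp y + Real.exp (-y)) := by
        rw [htanh]; field_simp; ring
      have h1m : 1 - mβ = 2 * Real.exp (-y) / (Real.exp y + Real.exp (-y)) := by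
        rw [htanh]; field_simp; ring
      have hratio : (1 + mβ) / (1 - mβ) = Real.exp y / Real.exp (-y) := by
        rw [h1p, h1m]
        field_simp
      have hratio2 : (1 + mβ) / (1 - mβ) = Real.exp (2 * y) := by
        rw [hratio, ← Real.exp_sub]; ring_nf
      have h1mpos : (0:ℝ) < 1 - mβ := by linarith
      have h1ppos : (0:ℝ) < 1 + mβ := by linarith
      have := congrArg Real.log hratio2
      rwa [Real.log_div h1ppos.ne' h1mpos.ne', Real.log_exp] at this
    simp only [hφdef]
    rw [hE]
    have : (1 / (2 * β)) * (2 * (β * J₀ * mβ)) = J₀ * mβ := by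
      field_simp
    rw [this]; ring
  -- G 0 = 0 and G mβ = 0
  have hG0 : G 0 = 0 := by
    simp only [hGdef, hc]
    field_simp
    ring
  have hGm : G mβ = 0 := by
    simp only [hGdef]
    rw [hF mβ]
    ring
  -- continuity helper
  have hGc : ∀ s ⊆ Ioo (-1:ℝ) 1, ContinuousOn G s := by
    intro s hs
    exact fun t ht => ((hG' t (hs ht)).continuousAt).continuousWithinAt
  have hφc : ∀ s ⊆ Ioo (-1:ℝ) 1, ContinuousOn φ s := by
    intro s hs
    exact fun t ht => ((hφ' t (hs ht)).continuousAt).continuousWithinAt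
  -- Rolle for G on [0, mβ] : ξ with φ ξ = 0
  have hsub1 : Icc (0:ℝ) mβ ⊆ Ioo (-1:ℝ) 1 := fun x hx => ⟨by linarith [hx.1], by linarith [hx.2]⟩
  obtain ⟨ξ, hξmem, hφξ⟩ : ∃ ξ ∈ Ioo (0:ℝ) mβ, φ ξ = 0 := by
    apply exists_hasDerivAt_eq_zero hm0 (hGc _ hsub1) (by rw [hG0, hGm])
    intro x hx
    exact hG' x (hsub1 ⟨hx.1.le, hx.2.le⟩)
  -- Rolle for φ on [ξ, mβ] : η with ψ η = 0
  have hsub2 : Icc ξ mβ ⊆ Ioo (-1:ℝ) 1 :=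
    fun x hx => ⟨by linarith [hx.1, hξmem.1], by linarith [hx.2]⟩
  obtain ⟨η, hηmem, hψη⟩ : ∃ η ∈ Ioo ξ mβ, ψ η = 0 := by
    apply exists_hasDerivAt_eq_zero hξmem.2 (hφc _ hsub2) (by rw [hφξ, hφm])
    intro x hx
    exact hφ' x (hsub2 ⟨hx.1.le, hx.2.le⟩)
  have hηI : η ∈ Ico (0:ℝ) 1 := ⟨by linarith [hηmem.1, hξmem.1], by linarith [hηmem.2]⟩
  -- sign of ψ : negative before η, positive after
  have hψneg : ∀ x ∈ Ico (0:ℝ) 1, x < η → ψ x < 0 := by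
    intro x hx hxη
    have := hψmono x hx η hηI hxη
    linarith [hψη ▸ this]
  have hψpos : ∀ x ∈ Ico (0:ℝ) 1, η < x → 0 < ψ x := by
    intro x hx hηx
    have := hψmono η hηI x hx hηx
    linarith [hψη ▸ this]
  -- φ is antitone on [0, η] and monotone on [η, 1)
  have hsubφ1 : Icc (0:ℝ) η ⊆ Ioo (-1:ℝ) 1 :=
    fun x hx => ⟨by linarith [hx.1], by linarith [hx.2, hηI.2]⟩
  have hφanti : AntitoneOn φ (Icc 0 η) := by
    apply antitoneOn_of_hasDerivWithinAt_nonpos (convex_Icc 0 η) (hφc _ hsubφ1)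
      (f' := ψ)
    · intro x hx
      rw [interior_Icc] at hx
      exact (hφ' x (hsubφ1 ⟨hx.1.le, hx.2.le⟩)).hasDerivWithinAt
    · intro x hx
      rw [interior_Icc] at hx
      exact (hψneg x ⟨hx.1.le, by linarith [hx.2, hηI.2]⟩ hx.2).le
  have hφmono : MonotoneOn φ (Ico η 1) := by
    apply monotoneOn_of_hasDerivWithinAt_nonneg (convex_Ico η 1)
      (hφc _ (fun x hx => ⟨by linarith [hx.1, hηI.1], hx.2⟩)) (f' := ψ)
    · intro x hx
      rw [interior_Ico] at hx
      exact (hφ' x ⟨by linarith [hx.1, hηI.1], hx.2⟩).hasDerivWithinAt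
    · intro x hx
      rw [interior_Ico] at hx
      exact (hψpos x ⟨by linarith [hx.1, hηI.1], hx.2⟩ hx.1).le
  -- sign pattern of φ
  have hξη : ξ ≤ η := hηmem.1.le
  have hφpos1 : ∀ x ∈ Icc (0:ℝ) ξ, 0 ≤ φ x := by
    intro x hx
    have := hφanti ⟨hx.1, by linarith [hx.2]⟩ ⟨by linarith [hξmem.1, hx.1], hξη⟩ hx.2
    linarith [hφξ ▸ this]
  have hφneg : ∀ x ∈ Icc ξ mβ, φ x ≤ 0 := by
    intro x hx
    rcases le_or_gt x η with hcase | hcase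
    · have := hφanti ⟨hξmem.1.le, hξη⟩ ⟨by linarith [hξmem.1.le, hx.1], hcase⟩ hx.1
      linarith [hφξ ▸ this]
    · have := hφmono ⟨hcase.le, by linarith [hx.2]⟩ ⟨by linarith [hηmem.2], by linarith [hx.2]⟩
        hx.2
      linarith [hφm ▸ this]
  have hφpos2 : ∀ x ∈ Ico mβ (1:ℝ), 0 ≤ φ x := by
    intro x hx
    have := hφmono ⟨hηmem.2.le, by linarith⟩ ⟨by linarith [hηmem.2, hx.1], hx.2⟩ hx.1
    linarith [hφm ▸ this]
  -- G ≥ 0 on [0, 1)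
  have hGnonneg : ∀ x ∈ Ico (0:ℝ) 1, 0 ≤ G x := by
    intro x hx
    rcases le_or_gt x ξ with h1 | h1
    · -- G monotone on [0, ξ]
      have hmon : MonotoneOn G (Icc 0 ξ) := by
        apply monotoneOn_of_hasDerivWithinAt_nonneg (convex_Icc 0 ξ)
          (hGc _ (fun y hy => hsub1 ⟨hy.1, by linarith [hy.2, hξmem.2]⟩)) (f' := φ)
        · intro y hy
          rw [interior_Icc] at hy
          exact (hG' y (hsub1 ⟨hy.1.le, by linarith [hy.2, hξmem.2]⟩)).hasDerivWithinAt
        · intro y hy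
          rw [interior_Icc] at hy
          exact hφpos1 y ⟨hy.1.le, hy.2.le⟩
      have := hmon ⟨le_refl 0, hξmem.1.le⟩ ⟨hx.1, h1⟩ hx.1
      linarith [hG0 ▸ this]
    rcases le_or_gt x mβ with h2 | h2
    · -- G antitone on [ξ, mβ]
      have hanti : AntitoneOn G (Icc ξ mβ) := by
        apply antitoneOn_of_hasDerivWithinAt_nonpos (convex_Icc ξ mβ) (hGc _ hsub2) (f' := φ)
        · intro y hy
          rw [interior_Icc] at hy
          exact (hG' y (hsub2 ⟨hy.1.le, hy.2.le⟩)).hasDerivWithinAt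
        · intro y hy
          rw [interior_Icc] at hy
          exact hφneg y ⟨hy.1.le, hy.2.le⟩
      have := hanti ⟨h1.le, h2⟩ ⟨hξmem.2.le, le_refl mβ⟩ h2
      linarith [hGm ▸ this]
    · -- G monotone on [mβ, 1)
      have hmon : MonotoneOn G (Ico mβ 1) := by
        apply monotoneOn_of_hasDerivWithinAt_nonneg (convex_Ico mβ 1)
          (hGc _ (fun y hy => ⟨by linarith [hy.1], hy.2⟩)) (f' := φ)
        · intro y hy
          rw [interior_Ico] at hy
          exact (hG' y ⟨by linarith [hy.1], hy.2⟩).hasDerivWithinAt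
        · intro y hy
          rw [interior_Ico] at hy
          exact hφpos2 y ⟨hy.1.le, hy.2⟩
      have := hmon ⟨le_refl mβ, by linarith⟩ ⟨h2.le, hx.2⟩ h2.le
      linarith [hGm ▸ this]
  -- evenness of F
  have hFeven : ∀ t : ℝ, F (-t) = F t := by
    intro t
    rw [hF, hF, ha (-t), ha t]
    have e1 : (1 + -t) = (1 - t) := by ring
    have e2 : (1 - -t) = (1 + t) := by ring
    rw [e1, e2]
    ring
  -- conclusion
  intro t ht
  have habs : |t| ∈ Ico (0:ℝ) 1 := ⟨abs_nonneg t, abs_lt.mpr ⟨ht.1, ht.2⟩⟩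
  have hFt_abs : F |t| = F t := by
    rcases le_or_gt 0 t with h0 | h0
    · rw [abs_of_nonneg h0]
    · rw [abs_of_neg h0, hFeven]
  have hkey : c * (|t| - mβ) ^ 2 ≤ F t := by
    have := hGnonneg |t| habs
    simp only [hGdef] at this
    rw [hFt_abs] at this
    linarith
  constructor
  · rw [hFt t]
    have : F 0 / (2 * mβ ^ 2) * (|t| - mβ) ^ 2 = (c * (|t| - mβ) ^ 2) / 2 := by
      rw [hc]; ring
    rw [this]
    linarith
  · exact hkey
end

section
/- Let h_1, …, h_N > 0 with Σ_j h_j ≤ L, and suppose e : (0,∞) → ℝ satisfies e(h) - e* ≥ τ/(2h) for all h ≤ δ, where τ, δ > 0 and e* = inf e. If Σ_j h_j (e(h_j) - e*) ≤ 2ηL with η > 0, then the number of indices j with h_j ≤ δ is at most 4ηL/τ, and their total length Σ_{j : h_j ≤ δ} h_j is at most 4ηLδ/τ. -/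
open Finset

/-- If `Σ_j h_j (e(h_j) - e*) ≤ 2ηL`, with `e - e* ≥ τ/(2h)` for `h ≤ δ` and `e* = inf e`,
then the number of short intervals (`h_j ≤ δ`) is at most `4ηL/τ` and their total
length is at most `4ηLδ/τ`. -/
theorem stmt_14 (N : ℕ) (h : Fin N → ℝ) (L τ δ η estar : ℝ) (e : ℝ → ℝ)
    (hpos : ∀ j, 0 < h j) (hsum : ∑ j, h j ≤ L)
    (hL : 0 < L) (hτ : 0 < τ) (hδ : 0 < δ) (hη : 0 < η)
    (hinf : ∀ x : ℝ, 0 < x → estar ≤ e x)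
    (hlow : ∀ x : ℝ, 0 < x → x ≤ δ → τ / (2 * x) ≤ e x - estar)
    (hbound : ∑ j, h j * (e (h j) - estar) ≤ 2 * η * L) :
    ((Finset.univ.filter fun j => h j ≤ δ).card : ℝ) ≤ 4 * η * L / τ ∧
      ∑ j ∈ Finset.univ.filter (fun j => h j ≤ δ), h j ≤ 4 * η * L * δ / τ := by
  set S := Finset.univ.filter fun j => h j ≤ δ with hS
  have hterm : ∀ j ∈ S, τ / 2 ≤ h j * (e (h j) - estar) := by
    intro j hj
    have hjδ : h j ≤ δ := (Finset.mem_filter.mp hj).2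
    have hjp := hpos j
    have := hlow (h j) hjp hjδ
    calc τ / 2 = h j * (τ / (2 * h j)) := by
          field_simp
      _ ≤ h j * (e (h j) - estar) := by
          exact mul_le_mul_of_nonneg_left this hjp.le
  have hnonneg : ∀ j ∈ Finset.univ, 0 ≤ h j * (e (h j) - estar) := fun j _ =>
    mul_nonneg (hpos j).le (sub_nonneg.mpr (hinf (h j) (hpos j)))
  have hsub : ∑ j ∈ S, h j * (e (h j) - estar) ≤ ∑ j, h j * (e (h j) - estar) :=
    Finset.sum_le_sum_of_subset_of_nonneg (Finset.subset_univ S)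
      (fun j hj _ => hnonneg j hj)
  have hcardτ : (S.card : ℝ) * (τ / 2) ≤ 2 * η * L := by
    calc (S.card : ℝ) * (τ / 2) = ∑ _j ∈ S, τ / 2 := by
          rw [Finset.sum_const, nsmul_eq_mul]
      _ ≤ ∑ j ∈ S, h j * (e (h j) - estar) := Finset.sum_le_sum hterm
      _ ≤ ∑ j, h j * (e (h j) - estar) := hsub
      _ ≤ 2 * η * L := hbound
  have hcard : (S.card : ℝ) ≤ 4 * η * L / τ := by
    rw [le_div_iff₀ hτ]
    nlinarith
  refine ⟨hcard, ?_⟩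
  calc ∑ j ∈ S, h j ≤ ∑ _j ∈ S, δ :=
        Finset.sum_le_sum fun j hj => (Finset.mem_filter.mp hj).2
    _ = (S.card : ℝ) * δ := by rw [Finset.sum_const, nsmul_eq_mul]
    _ ≤ (4 * η * L / τ) * δ := mul_le_mul_of_nonneg_right hcard hδ.le
    _ = 4 * η * L * δ / τ := by ring
end

section
/- Suppose K : (0,1] → ℝ satisfies K(h) ≥ c·max{1/h, γ²(h-h*)²·𝟙[c'h* ≤ h ≤ C'/γ], 𝟙[h ≥ C'/γ]} in the piecewise sense: K(h) ≥ c/h for h ≤ c'h*, K(h) ≥ cγ²(h-h*)² for c'h* ≤ h ≤ C'/γ, and K(h) ≥ c for h ≥ C'/γ, where h* = Θ(γ^{-2/3}). Let intervals I_1,…,I_N with lengths |I_j| tile part of [0,L] and satisfy Σ_j |I_j| K(|I_j|) ≤ 10Lγ^{2/3+ε₀}. Then the total length of intervals with ||I_j| - h*| ≥ h*γ^{ε'} is at most C L γ^{ε₀ - 2ε'} for 0 < ε' < ε₀/2 and γ small, for a suitable constant C. -/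
open Finset

/-- If `K(h) = e(h) - e(h*) ≥ 0` satisfies the piecewise lower bounds `K(h) ≥ c/h` for
`h ≤ c' h*`, `K(h) ≥ c γ² (h - h*)²` for `c' h* ≤ h ≤ C'/γ`, `K(h) ≥ c` for `h ≥ C'/γ`,
with `h* = Θ(γ^{-2/3})`, and intervals of lengths `ℓ_j` tiling part of `[0,L]` satisfy
`Σ_j ℓ_j K(ℓ_j) ≤ 10 L γ^{2/3+ε₀}`, then the total length of the intervals with
`|ℓ_j - h*| ≥ h* γ^{ε'}` is at most `C L γ^{ε₀ - 2ε'}` for a suitable constant `C`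
and all `γ` small enough. -/
theorem stmt_19 (c c' C' c₁ c₂ ε₀ ε' : ℝ)
    (hc : 0 < c) (hc' : 0 < c') (hC' : 0 < C') (hc₁ : 0 < c₁) (hc₁₂ : c₁ ≤ c₂)
    (hε₀0 : 0 < ε₀) (hε₀1 : ε₀ < 1 / 3) (hε'0 : 0 < ε') (hε' : ε' < ε₀ / 2) :
    ∃ C > (0 : ℝ), ∃ γ₀ > (0 : ℝ), ∀ γ : ℝ, 0 < γ → γ ≤ γ₀ →
      ∀ L > (0 : ℝ), ∀ hstar : ℝ,
        c₁ * γ ^ (-(2 : ℝ) / 3) ≤ hstar → hstar ≤ c₂ * γ ^ (-(2 : ℝ) / 3) →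
      ∀ K : ℝ → ℝ,
        (∀ h : ℝ, 0 < h → 0 ≤ K h) →
        (∀ h : ℝ, 0 < h → h ≤ c' * hstar → c / h ≤ K h) →
        (∀ h : ℝ, c' * hstar ≤ h → h ≤ C' / γ → c * γ ^ 2 * (h - hstar) ^ 2 ≤ K h) →
        (∀ h : ℝ, C' / γ ≤ h → c ≤ K h) →
      ∀ N : ℕ, ∀ ℓ : Fin N → ℝ,
        (∀ j, 0 < ℓ j) → (∑ j, ℓ j ≤ L) →
        (∑ j, ℓ j * K (ℓ j) ≤ 10 * L * γ ^ (2 / 3 + ε₀)) →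
        ∑ j ∈ Finset.univ.filter (fun j => hstar * γ ^ ε' ≤ |ℓ j - hstar|), ℓ j ≤
          C * L * γ ^ (ε₀ - 2 * ε') := by
  have hc₂ : 0 < c₂ := lt_of_lt_of_le hc₁ hc₁₂
  set m : ℝ := min c (min (c / (c' * c₂)) (c * c₁ ^ 2)) with hm
  have hm0 : 0 < m := lt_min hc (lt_min (by positivity) (by positivity))
  refine ⟨10 / m, by positivity, 1, one_pos, ?_⟩
  intro γ hγ0 hγ1 L hL hstar hst1 hst2 K hK0 hK1 hK2 hK3 N ℓ hℓpos hsum hbound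
  have hrp : (0:ℝ) < γ ^ (-(2:ℝ) / 3) := Real.rpow_pos_of_pos hγ0 _
  have hstar0 : 0 < hstar := lt_of_lt_of_le (by positivity) hst1
  set A : ℝ := γ ^ ((2:ℝ) / 3 + 2 * ε') with hA
  have hA0 : 0 < A := Real.rpow_pos_of_pos hγ0 _
  have hAle : A ≤ γ ^ ((2:ℝ) / 3) :=
    Real.rpow_le_rpow_of_exponent_ge hγ0 hγ1 (by linarith)
  have hA1 : A ≤ 1 := Real.rpow_le_one hγ0.le hγ1 (by linarith)
  have hprod : γ ^ ((2:ℝ) / 3) * γ ^ (-(2:ℝ) / 3) = 1 := by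
    rw [← Real.rpow_add hγ0]; norm_num
  have hcc : (c' * c₂ : ℝ) ≠ 0 := ne_of_gt (by positivity)
  -- key pointwise bound
  have key : ∀ h : ℝ, 0 < h → hstar * γ ^ ε' ≤ |h - hstar| → m * A ≤ K h := by
    intro h hpos hfar
    rcases le_or_gt h (c' * hstar) with hcase | hcase
    · -- small h : K h ≥ c / h
      have hKh := hK1 h hpos hcase
      have h1 : h ≤ c' * c₂ * γ ^ (-(2:ℝ) / 3) := by
        calc h ≤ c' * hstar := hcase
        _ ≤ c' * (c₂ * γ ^ (-(2:ℝ) / 3)) := mul_le_mul_of_nonneg_left hst2 hc'.le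
        _ = c' * c₂ * γ ^ (-(2:ℝ) / 3) := by ring
      have hm2 : m ≤ c / (c' * c₂) := le_trans (min_le_right _ _) (min_le_left _ _)
      have hmul : m * A * h ≤ (c / (c' * c₂)) * γ ^ ((2:ℝ) / 3) * (c' * c₂ * γ ^ (-(2:ℝ) / 3)) := by
        gcongr
      have heq : (c / (c' * c₂)) * γ ^ ((2:ℝ) / 3) * (c' * c₂ * γ ^ (-(2:ℝ) / 3)) = c := by
        calc (c / (c' * c₂)) * γ ^ ((2:ℝ) / 3) * (c' * c₂ * γ ^ (-(2:ℝ) / 3))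
            = (c / (c' * c₂) * (c' * c₂)) * (γ ^ ((2:ℝ) / 3) * γ ^ (-(2:ℝ) / 3)) := by ring
        _ = c := by rw [hprod, div_mul_cancel₀ _ hcc, mul_one]
      have hmc : m * A * h ≤ c := by rw [heq] at hmul; exact hmul
      calc m * A ≤ c / h := (le_div_iff₀ hpos).2 hmc
      _ ≤ K h := hKh
    · rcases le_or_gt h (C' / γ) with hcase2 | hcase2
      · -- middle : quadratic bound
        have hKh := hK2 h hcase.le hcase2
        have hge0 : (0:ℝ) ≤ hstar * γ ^ ε' :=
          mul_nonneg hstar0.le (Real.rpow_pos_of_pos hγ0 _).le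
        have hsq : (hstar * γ ^ ε') ^ 2 ≤ (h - hstar) ^ 2 := by
          rw [← sq_abs (h - hstar)]
          exact pow_le_pow_left₀ hge0 hfar 2
        have hstarsq : (c₁ * γ ^ (-(2:ℝ) / 3)) ^ 2 ≤ hstar ^ 2 :=
          pow_le_pow_left₀ (by positivity) hst1 2
        have hrpow2 : γ ^ (2:ℕ) = γ ^ ((2:ℝ)) := (Real.rpow_natCast γ 2).symm
        have hident : γ ^ ((2:ℝ)) * (γ ^ (-(2:ℝ) / 3)) ^ 2 * (γ ^ ε') ^ 2 = A := by
          rw [hA, ← Real.rpow_natCast (γ ^ (-(2:ℝ) / 3)) 2, ← Real.rpow_natCast (γ ^ ε') 2,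
            ← Real.rpow_mul hγ0.le, ← Real.rpow_mul hγ0.le,
            ← Real.rpow_add hγ0, ← Real.rpow_add hγ0]
          congr 1
          push_cast
          ring
        have hm2 : m ≤ c * c₁ ^ 2 := le_trans (min_le_right _ _) (min_le_right _ _)
        have hchain : m * A ≤ c * γ ^ 2 * (h - hstar) ^ 2 := by
          calc m * A ≤ (c * c₁ ^ 2) * A := by gcongr
          _ = c * γ ^ ((2:ℝ)) * (c₁ * γ ^ (-(2:ℝ) / 3)) ^ 2 * (γ ^ ε') ^ 2 := by
              rw [← hident]; ring
          _ ≤ c * γ ^ ((2:ℝ)) * hstar ^ 2 * (γ ^ ε') ^ 2 := by gcongr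
          _ = c * γ ^ ((2:ℝ)) * (hstar * γ ^ ε') ^ 2 := by ring
          _ ≤ c * γ ^ ((2:ℝ)) * (h - hstar) ^ 2 := by
              exact mul_le_mul_of_nonneg_left hsq (by positivity)
          _ = c * γ ^ 2 * (h - hstar) ^ 2 := by rw [hrpow2]
        exact hchain.trans hKh
      · -- large h
        have hKh := hK3 h hcase2.le
        have hm2 : m ≤ c := min_le_left _ _
        calc m * A ≤ c * 1 := mul_le_mul hm2 hA1 hA0.le hc.le
        _ = c := mul_one c
        _ ≤ K h := hKh
  set S := Finset.univ.filter (fun j => hstar * γ ^ ε' ≤ |ℓ j - hstar|) with hS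
  have sumKey : (∑ j ∈ S, ℓ j) * (m * A) ≤ 10 * L * γ ^ (2 / 3 + ε₀) := by
    calc (∑ j ∈ S, ℓ j) * (m * A) = ∑ j ∈ S, ℓ j * (m * A) := by rw [Finset.sum_mul]
    _ ≤ ∑ j ∈ S, ℓ j * K (ℓ j) := by
        refine Finset.sum_le_sum fun j hj => ?_
        have hj' := (Finset.mem_filter.1 hj).2
        exact mul_le_mul_of_nonneg_left (key (ℓ j) (hℓpos j) hj') (hℓpos j).le
    _ ≤ ∑ j, ℓ j * K (ℓ j) := by
        refine Finset.sum_le_sum_of_subset_of_nonneg (Finset.filter_subset _ _) ?_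
        intro j _ _
        exact mul_nonneg (hℓpos j).le (hK0 _ (hℓpos j))
    _ ≤ 10 * L * γ ^ (2 / 3 + ε₀) := hbound
  have hexp : A * γ ^ (ε₀ - 2 * ε') = γ ^ ((2:ℝ) / 3 + ε₀) := by
    rw [hA, ← Real.rpow_add hγ0]; congr 1; ring
  have hfinal : (∑ j ∈ S, ℓ j) * (m * A) ≤ (10 / m * L * γ ^ (ε₀ - 2 * ε')) * (m * A) := by
    refine sumKey.trans (le_of_eq ?_)
    rw [show (2:ℝ) / 3 + ε₀ = (2:ℝ) / 3 + ε₀ from rfl, ← hexp]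
    field_simp
  exact le_of_mul_le_mul_right hfinal (by positivity)
end
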